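/- If G_1 = (V_1, E_1) and G_2 = (V_2, E_2) are exactly k-edge-connected multigraphs on disjoint vertex sets, u_1 ∈ V_1, u_2 ∈ V_2, and G is the block gluing of G_1 and G_2 at u_1 and u_2 (the graph obtained by identifying u_1 and u_2 into a single vertex u, keeping all edges of G_1 and G_2, with edges formerly incident to u_1 or u_2 now incident to u), then G is exactly k-edge-connected. -/

import Mathlib

/-! Basic theory of loopless undirected multigraphs. -/

/-- A loopless undirected multigraph on the vertex type `V`: a type of edges
together with a map assigning to each edge its unordered pair of (distinct)
endpoints.  All multigraphs are assumed to have finitely many edges. -/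
structure Multigraph (V : Type) where
  Edge : Type
  ends : Edge → Sym2 V
  loopless : ∀ e, ¬ (ends e).IsDiag
  edge_finite : Finite Edge

namespace Multigraph

open scoped Classical

variable {V : Type}

instance (G : Multigraph V) : Finite G.Edge := G.edge_finite

lemma exists_pair_eq {α : Type} (z : Sym2 α) : ∃ x y, z = s(x, y) := by
  induction z using Sym2.ind with
  | _ x y => exact ⟨x, y, rfl⟩

lemma map_not_isDiag {α β : Type} (f : α → β) (z : Sym2 α)
    (hf : ∀ x ∈ z, ∀ y ∈ z, f x = f y → x = y) (hz : ¬ z.IsDiag) :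
    ¬ (z.map f).IsDiag := by
  obtain ⟨x, y, rfl⟩ := exists_pair_eq z
  rw [Sym2.map_pair_eq, Sym2.mk_isDiag_iff]
  rw [Sym2.mk_isDiag_iff] at hz
  exact fun h => hz (hf x (by simp) y (by simp) h)

/-- Restrict an unordered pair, all of whose members satisfy `P`, to an
unordered pair of elements of the subtype `{x // P x}`. -/
noncomputable def sym2RestrictP {α : Type} (P : α → Prop) (z : Sym2 α) (h : ∀ x ∈ z, P x) :
    Sym2 {x : α // P x} :=
  z.map fun x =>
    if hx : P x then ⟨x, hx⟩
    else Classical.choice (by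
      obtain ⟨a, b, rfl⟩ := exists_pair_eq z
      exact ⟨⟨a, h a (by simp)⟩⟩)

lemma sym2RestrictP_not_isDiag {α : Type} (P : α → Prop) (z : Sym2 α) (h : ∀ x ∈ z, P x)
    (hz : ¬ z.IsDiag) : ¬ (sym2RestrictP P z h).IsDiag := by
  apply map_not_isDiag
  · intro a ha b hb hab
    rw [dif_pos (h a ha), dif_pos (h b hb)] at hab
    exact congrArg Subtype.val hab
  · exact hz

/-- Walks in a multigraph, recorded as alternating sequences of vertices and edges. -/
inductive Walk (G : Multigraph V) : V → V → Type
  | nil (v : V) : Walk G v v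
  | cons {u v w : V} (e : G.Edge) (he : G.ends e = s(u, v)) (p : Walk G v w) : Walk G u w

namespace Walk

variable {G : Multigraph V}

/-- The list of edges used by a walk. -/
def edges : ∀ {u v : V}, G.Walk u v → List G.Edge
  | _, _, nil _ => []
  | _, _, cons e _ p => e :: p.edges

/-- The list of vertices visited by a walk, in order. -/
def support : ∀ {u v : V}, G.Walk u v → List V
  | u, _, nil _ => [u]
  | u, _, cons _ _ p => u :: p.support

end Walk

/-- `G.HasEDP u v k` : there are (at least) `k` pairwise edge-disjoint paths
between `u` and `v` in `G` (formalized as `k` pairwise edge-disjoint trails,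
which is equivalent). -/
def HasEDP (G : Multigraph V) (u v : V) (k : ℕ) : Prop :=
  ∃ P : Fin k → G.Walk u v,
    (∀ i, (P i).edges.Nodup) ∧
    ∀ i j, i ≠ j → ∀ e, e ∈ (P i).edges → e ∉ (P j).edges

/-- `G` is `k`-edge-connected: between any two distinct vertices there are at
least `k` pairwise edge-disjoint paths. -/
def EdgeConnected (G : Multigraph V) (k : ℕ) : Prop :=
  Nontrivial V ∧ ∀ u v : V, u ≠ v → G.HasEDP u v k

/-- `G` is exactly `k`-edge-connected: between any two distinct vertices there
are exactly `k` pairwise edge-disjoint paths (at least `k`, and not `k + 1`). -/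
def ExactlyEdgeConnected (G : Multigraph V) (k : ℕ) : Prop :=
  Nontrivial V ∧ ∀ u v : V, u ≠ v → G.HasEDP u v k ∧ ¬ G.HasEDP u v (k + 1)

/-- The degree of a vertex: the number of edges incident to it. -/
noncomputable def degree (G : Multigraph V) (v : V) : ℕ :=
  {e : G.Edge | v ∈ G.ends e}.ncard

/-- Two vertices are adjacent if some edge joins them. -/
def Adj (G : Multigraph V) (u v : V) : Prop := ∃ e : G.Edge, G.ends e = s(u, v)

/-- `G` restricted to `S` is connected (witnessed by walks staying inside `S`). -/
def ConnectedOn (G : Multigraph V) (S : Set V) : Prop :=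
  ∀ u ∈ S, ∀ v ∈ S, ∃ p : G.Walk u v, ∀ x ∈ p.support, x ∈ S

/-- A multigraph is connected if it is nonempty and any two vertices are
joined by a walk. -/
def Connected (G : Multigraph V) : Prop :=
  Nonempty V ∧ ∀ u v : V, Nonempty (G.Walk u v)

/-- A multigraph is 2-vertex-connected (biconnected) if it is connected and
removing any single vertex leaves it connected. -/
def Biconnected (G : Multigraph V) : Prop :=
  G.Connected ∧ ∀ x : V, G.ConnectedOn {x}ᶜ

/-- A closed walk is a cycle if it repeats no edge, repeats no vertex except
the base point, and has length at least 2 (a double edge is a cycle of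
length 2; loops are excluded since multigraphs are loopless). -/
def IsCycle {G : Multigraph V} {v : V} (p : G.Walk v v) : Prop :=
  p.edges.Nodup ∧ p.support.tail.Nodup ∧ 2 ≤ p.edges.length

/-- A closed walk is chordless if no edge outside of it joins two of its
vertices (a parallel copy of one of its edges counts as a chord). -/
def IsChordless {G : Multigraph V} {v : V} (p : G.Walk v v) : Prop :=
  ∀ e : G.Edge, e ∉ p.edges → ∀ x y : V, G.ends e = s(x, y) →
    x ∈ p.support → y ∈ p.support → False

/-- `G.ReachAvoid S x y`: there is a walk from `x` to `y` avoiding the set `S`. -/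
def ReachAvoid (G : Multigraph V) (S : Set V) (x y : V) : Prop :=
  ∃ p : G.Walk x y, ∀ z ∈ p.support, z ∉ S

/-- The vertex sets of the connected components of `G ∖ S`.  For a cycle (or
any subgraph) `C`, the `C`-partition of the paper consists of `C` together
with these components; its size is the number of components. -/
def componentsAvoiding (G : Multigraph V) (S : Set V) : Set (Set V) :=
  {T | ∃ x, x ∉ S ∧ T = {y | G.ReachAvoid S x y}}

/-- Contract the (nonempty) vertex set `S` of `G` to a single new vertex
(`none`), deleting the edges inside `S`. -/
noncomputable def contractSet (G : Multigraph V) (S : Set V) :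
    Multigraph (Option {x : V // x ∉ S}) where
  Edge := {e : G.Edge // ¬ ∀ x ∈ G.ends e, x ∈ S}
  ends e := (G.ends e.1).map fun x => if h : x ∈ S then none else some ⟨x, h⟩
  loopless := by
    rintro ⟨e, he⟩ hd
    obtain ⟨x, y, hxy⟩ := exists_pair_eq (G.ends e)
    have hxyne : x ≠ y := by
      have h0 := G.loopless e
      rw [hxy, Sym2.mk_isDiag_iff] at h0
      exact h0
    have hor : x ∉ S ∨ y ∉ S := by
      by_contra hcon
      push_neg at hcon
      refine he fun z hz => ?_
      rw [hxy, Sym2.mem_iff] at hz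
      rcases hz with rfl | rfl
      exacts [hcon.1, hcon.2]
    simp only [hxy, Sym2.map_pair_eq, Sym2.mk_isDiag_iff] at hd
    rcases hor with hx | hy
    · rw [dif_neg hx] at hd
      by_cases hy : y ∈ S
      · rw [dif_pos hy] at hd; exact absurd hd (by simp)
      · rw [dif_neg hy] at hd
        exact hxyne (congrArg Subtype.val (Option.some_injective _ hd))
    · rw [dif_neg hy] at hd
      by_cases hx : x ∈ S
      · rw [dif_pos hx] at hd; exact absurd hd (by simp)
      · rw [dif_neg hx] at hd
        exact hxyne (congrArg Subtype.val (Option.some_injective _ hd))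
  edge_finite := by
    have := G.edge_finite
    exact inferInstance

/-- The subgraph of `G` induced by the vertex set `S`. -/
noncomputable def induce (G : Multigraph V) (S : Set V) : Multigraph ↥S where
  Edge := {e : G.Edge // ∀ x ∈ G.ends e, x ∈ S}
  ends e := sym2RestrictP (· ∈ S) (G.ends e.1) e.2
  loopless := fun e => sym2RestrictP_not_isDiag _ _ _ (G.loopless e.1)
  edge_finite := by
    have := G.edge_finite
    exact inferInstance

/-- Isomorphism of multigraphs. -/
structure Iso {V W : Type} (G : Multigraph V) (H : Multigraph W) where
  vmap : V ≃ W
  emap : G.Edge ≃ H.Edge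
  ends_vmap : ∀ e : G.Edge, H.ends (emap e) = (G.ends e).map vmap

/-- `G` is quasi `k`-regular: at most one vertex has degree different from `k`. -/
def QuasiRegular (G : Multigraph V) (k : ℕ) : Prop :=
  {v : V | G.degree v ≠ k}.Subsingleton

end Multigraph
namespace Multigraph

open scoped Classical

variable {V : Type}

/-- Block gluing: identify the vertex `u₁` of `G₁` with the vertex `u₂` of `G₂`
(the identified vertex is represented by `Sum.inl u₁`), keeping all edges. -/
noncomputable def blockGlue {V₁ V₂ : Type} (G₁ : Multigraph V₁) (G₂ : Multigraph V₂)
    (u₁ : V₁) (u₂ : V₂) : Multigraph (V₁ ⊕ {y : V₂ // y ≠ u₂}) where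
  Edge := G₁.Edge ⊕ G₂.Edge
  ends e :=
    match e with
    | .inl e => (G₁.ends e).map Sum.inl
    | .inr e => (G₂.ends e).map fun y => if h : y = u₂ then Sum.inl u₁ else Sum.inr ⟨y, h⟩
  loopless := by
    rintro (e | e) hd
    · exact map_not_isDiag _ _ (fun x _ y _ h => Sum.inl_injective h) (G₁.loopless e) hd
    · refine map_not_isDiag _ _ (fun x _ y _ h => ?_) (G₂.loopless e) hd
      by_cases hx : x = u₂ <;> by_cases hy : y = u₂
      · rw [hx, hy]
      · simp [hx, hy] at h
      · simp [hx, hy] at h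
      · simp [hx, hy] at h
        exact h
  edge_finite := by
    have := G₁.edge_finite; have := G₂.edge_finite
    exact inferInstance

/-- `k`-bridge addition: add a new vertex (`none`) joined to the existing
vertex `v` by `k` parallel edges. -/
def bridgeAdd (G : Multigraph V) (v : V) (k : ℕ) : Multigraph (Option V) where
  Edge := G.Edge ⊕ Fin k
  ends e :=
    match e with
    | .inl e => (G.ends e).map some
    | .inr _ => s(none, some v)
  loopless := by
    rintro (e | i) hd
    · exact map_not_isDiag _ _ (fun x _ y _ h => Option.some_injective _ h) (G.loopless e) hd
    · rw [Sym2.mk_isDiag_iff] at hd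
      exact absurd hd (by simp)
  edge_finite := by
    have := G.edge_finite
    exact inferInstance

end Multigraph
namespace Multigraph

open scoped Classical

variable {V : Type}

lemma other_ne {G : Multigraph V} {u : V} {e : G.Edge} (h : u ∈ G.ends e) :
    Sym2.Mem.other h ≠ u := by
  intro heq
  have hs := Sym2.other_spec h
  rw [heq] at hs
  have hl := G.loopless e
  rw [← hs, Sym2.mk_isDiag_iff] at hl
  exact hl rfl

/-- Vertex gluing: given vertices `u₁` of `G₁` and `u₂` of `G₂`, both of degree
`k` (witnessed by enumerations `ι₁`, `ι₂` of their incident edges), delete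
`u₁` and `u₂` and join, for each `i`, the other endpoint of the `i`-th edge at
`u₁` to the other endpoint of the `i`-th edge at `u₂`. -/
noncomputable def vertexGlue {V₁ V₂ : Type} (G₁ : Multigraph V₁) (G₂ : Multigraph V₂)
    (u₁ : V₁) (u₂ : V₂) {k : ℕ}
    (ι₁ : Fin k ≃ {e : G₁.Edge // u₁ ∈ G₁.ends e})
    (ι₂ : Fin k ≃ {e : G₂.Edge // u₂ ∈ G₂.ends e}) :
    Multigraph ({x : V₁ // x ≠ u₁} ⊕ {y : V₂ // y ≠ u₂}) where
  Edge := {e : G₁.Edge // u₁ ∉ G₁.ends e} ⊕ {e : G₂.Edge // u₂ ∉ G₂.ends e} ⊕ Fin k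
  ends e :=
    match e with
    | .inl e =>
        (sym2RestrictP (· ≠ u₁) (G₁.ends e.1) fun x hx hxe => e.2 (hxe ▸ hx)).map Sum.inl
    | .inr (.inl e) =>
        (sym2RestrictP (· ≠ u₂) (G₂.ends e.1) fun y hy hye => e.2 (hye ▸ hy)).map Sum.inr
    | .inr (.inr i) =>
        s(Sum.inl ⟨Sym2.Mem.other (ι₁ i).2, other_ne (ι₁ i).2⟩,
          Sum.inr ⟨Sym2.Mem.other (ι₂ i).2, other_ne (ι₂ i).2⟩)
  loopless := by
    rintro (e | e | i) hd
    · exact map_not_isDiag _ _ (fun x _ y _ h => Sum.inl_injective h)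
        (sym2RestrictP_not_isDiag _ _ _ (G₁.loopless e.1)) hd
    · exact map_not_isDiag _ _ (fun x _ y _ h => Sum.inr_injective h)
        (sym2RestrictP_not_isDiag _ _ _ (G₂.loopless e.1)) hd
    · rw [Sym2.mk_isDiag_iff] at hd
      exact absurd hd (by simp)
  edge_finite := by
    have := G₁.edge_finite; have := G₂.edge_finite
    exact inferInstance

/-- Cycle expansion: replace the vertex `u`, of degree `d` with incident edges
enumerated by `ι`, by a cycle on `d'` new vertices `u_0, …, u_{d'-1}`
(`2 ≤ d' ≤ d`); the `i`-th former edge at `u` is attached to `u_i` for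
`i < d' - 1` and to `u_{d'-1}` for `i ≥ d' - 1`, so each of `u_0, …, u_{d'-2}`
receives exactly one of them and `u_{d'-1}` receives the rest. -/
noncomputable def cycleExpand (G : Multigraph V) (u : V) {d d' : ℕ}
    (h2 : 2 ≤ d') (hdd : d' ≤ d)
    (ι : Fin d ≃ {e : G.Edge // u ∈ G.ends e}) :
    Multigraph ({x : V // x ≠ u} ⊕ Fin d') where
  Edge := {e : G.Edge // u ∉ G.ends e} ⊕ (Fin d ⊕ Fin d')
  ends e :=
    match e with
    | .inl e =>
        (sym2RestrictP (· ≠ u) (G.ends e.1) fun x hx hxe => e.2 (hxe ▸ hx)).map Sum.inl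
    | .inr (.inl i) =>
        s(Sum.inr ⟨min i.1 (d' - 1), by omega⟩,
          Sum.inl ⟨Sym2.Mem.other (ι i).2, other_ne (ι i).2⟩)
    | .inr (.inr j) =>
        s(Sum.inr j, Sum.inr ⟨(j.1 + 1) % d', Nat.mod_lt _ (by omega)⟩)
  loopless := by
    rintro (e | i | j) hd
    · exact map_not_isDiag _ _ (fun x _ y _ h => Sum.inl_injective h)
        (sym2RestrictP_not_isDiag _ _ _ (G.loopless e.1)) hd
    · rw [Sym2.mk_isDiag_iff] at hd
      exact absurd hd (by simp)
    · rw [Sym2.mk_isDiag_iff] at hd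
      have hj : j.1 < d' := j.2
      have := congrArg Fin.val (Sum.inr_injective hd)
      simp only at this
      rcases Nat.lt_or_ge (j.1 + 1) d' with h | h
      · rw [Nat.mod_eq_of_lt h] at this; omega
      · have hj1 : j.1 + 1 = d' := by omega
        rw [hj1, Nat.mod_self] at this; omega
  edge_finite := by
    have := G.edge_finite
    exact inferInstance

end Multigraph
namespace Multigraph

open scoped Classical

variable {V : Type}

/-- The edges of `G` crossing the vertex bipartition `⟨A, Aᶜ⟩`. -/
def cutEdges (G : Multigraph V) (A : Set V) : Set G.Edge :=
  {e | (∃ x ∈ G.ends e, x ∈ A) ∧ ∃ y ∈ G.ends e, y ∉ A}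

/-- The bipartition `⟨A, Aᶜ⟩` is a minimum edge cut of `G`: both sides are
nonempty and no other bipartition has fewer crossing edges. -/
def IsMinCut (G : Multigraph V) (A : Set V) : Prop :=
  A.Nonempty ∧ Aᶜ.Nonempty ∧
    ∀ B : Set V, B.Nonempty → Bᶜ.Nonempty →
      (G.cutEdges A).ncard ≤ (G.cutEdges B).ncard

/-- One side of a vertex splitting: keep the side `A` of the cut `⟨A, Aᶜ⟩`,
delete the other side, and reattach each cut edge to a single new vertex
(`none`). -/
noncomputable def splitSide (G : Multigraph V) (A : Set V) :
    Multigraph (Option {x : V // x ∈ A}) where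
  Edge := {e : G.Edge // ∀ x ∈ G.ends e, x ∈ A} ⊕ {e : G.Edge // e ∈ G.cutEdges A}
  ends e :=
    match e with
    | .inl e => (sym2RestrictP (· ∈ A) (G.ends e.1) e.2).map some
    | .inr e =>
        s(none, some ⟨Classical.choose e.2.1, (Classical.choose_spec e.2.1).2⟩)
  loopless := by
    rintro (e | e) hd
    · exact map_not_isDiag _ _ (fun x _ y _ h => Option.some_injective _ h)
        (sym2RestrictP_not_isDiag _ _ _ (G.loopless e.1)) hd
    · rw [Sym2.mk_isDiag_iff] at hd
      exact absurd hd (by simp)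
  edge_finite := by
    have := G.edge_finite
    exact inferInstance

/-- The dumbbell graph: two vertices joined by three parallel edges. -/
def dumbbell : Multigraph (Fin 2) where
  Edge := Fin 3
  ends _ := s(0, 1)
  loopless := fun _ h => absurd (Sym2.mk_isDiag_iff.mp h) (by decide)
  edge_finite := inferInstance

/-- `B` is (the vertex set of) a block of `G`: a maximal set of vertices
inducing a connected, 2-vertex-connected subgraph. -/
def IsBlock (G : Multigraph V) (B : Set V) : Prop :=
  (G.induce B).Biconnected ∧
    ∀ B' : Set V, B ⊆ B' → (G.induce B').Biconnected → B' = B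

/-- The set of double edges of `G`, as unordered pairs of distinct parallel
edges. -/
def doubleEdges (G : Multigraph V) : Set (Sym2 G.Edge) :=
  {z | ∃ e f : G.Edge, z = s(e, f) ∧ e ≠ f ∧ G.ends e = G.ends f}

/-- A collapsible cycle: a chordless, non-articulation cycle, all but at most
one of whose vertices have degree 3, whose contraction to a single vertex
yields an exactly 3-edge-connected multigraph. -/
def IsCollapsible {G : Multigraph V} {v : V} (p : G.Walk v v) : Prop :=
  IsCycle p ∧ IsChordless p ∧
    (G.componentsAvoiding {x | x ∈ p.support}).Subsingleton ∧
    {x : V | x ∈ p.support ∧ G.degree x ≠ 3}.Subsingleton ∧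
    (G.contractSet {x | x ∈ p.support}).ExactlyEdgeConnected 3

end Multigraph
namespace Multigraph

open scoped Classical

variable {V : Type}

/-- Smooth out the degree-two vertex `x` (whose two incident edges are
`e₁ = (x, a)` and `e₂ = (x, b)`): delete `x`, `e₁` and `e₂` and add a single
new edge joining `a` and `b`. -/
noncomputable def smoothAt {S : Set V} (H : Multigraph ↥S) (x a b : ↥S)
    (e₁ e₂ : H.Edge) (hne : e₁ ≠ e₂)
    (h₁ : H.ends e₁ = s(x, a)) (h₂ : H.ends e₂ = s(x, b))
    (hax : a ≠ x) (hbx : b ≠ x) (hab : a ≠ b)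
    (hdeg : ∀ e : H.Edge, x ∈ H.ends e → e = e₁ ∨ e = e₂) :
    Multigraph ↥(S \ {(x : V)}) where
  Edge := {e : H.Edge // e ≠ e₁ ∧ e ≠ e₂} ⊕ Unit
  ends e :=
    match e with
    | .inl e =>
        (sym2RestrictP (fun y : ↥S => y ≠ x) (H.ends e.1)
            (fun y hy hyx => by
              subst hyx
              rcases hdeg e.1 hy with h | h
              exacts [e.2.1 h, e.2.2 h])).map
          fun y => ⟨y.1.1, y.1.2, fun hh => y.2 (Subtype.ext hh)⟩
    | .inr _ =>
        s(⟨a.1, a.2, fun hh => hax (Subtype.ext hh)⟩,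
          ⟨b.1, b.2, fun hh => hbx (Subtype.ext hh)⟩)
  loopless := by
    rintro (e | e) hd
    · refine map_not_isDiag _ _ (fun y _ z _ h => ?_)
        (sym2RestrictP_not_isDiag _ _ _ (H.loopless e.1)) hd
      have hv := Subtype.ext_iff.mp h
      exact Subtype.ext (Subtype.ext hv)
    · rw [Sym2.mk_isDiag_iff] at hd
      have hv := Subtype.ext_iff.mp hd
      exact hab (Subtype.ext hv)
  edge_finite := by
    have := H.edge_finite
    exact inferInstance

/-- `SmoothSeq H K` : the multigraph `K` is obtained from `H` by a finite
sequence of smoothings of degree-two vertices. -/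
inductive SmoothSeq {V : Type} : ∀ {S T : Set V}, Multigraph ↥S → Multigraph ↥T → Prop
  | refl {S : Set V} (H : Multigraph ↥S) : SmoothSeq H H
  | step {S T : Set V} {H : Multigraph ↥S} {K : Multigraph ↥T}
      (x a b : ↥S) (e₁ e₂ : H.Edge) (hne : e₁ ≠ e₂)
      (h₁ : H.ends e₁ = s(x, a)) (h₂ : H.ends e₂ = s(x, b))
      (hax : a ≠ x) (hbx : b ≠ x) (hab : a ≠ b)
      (hdeg : ∀ e : H.Edge, x ∈ H.ends e → e = e₁ ∨ e = e₂) :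
      SmoothSeq (smoothAt H x a b e₁ e₂ hne h₁ h₂ hax hbx hab hdeg) K → SmoothSeq H K

/-- `G` is a 3-thick tree: it is obtained from a tree by replacing every tree
edge by three parallel edges. -/
def IsThreeThickTree (G : Multigraph V) : Prop :=
  ∃ T : SimpleGraph V, T.IsTree ∧
    ∃ f : G.Edge ≃ T.edgeSet × Fin 3, ∀ e : G.Edge, G.ends e = ((f e).1 : Sym2 V)

/-- The graphs obtainable from dumbbell graphs by cycle expansions and block
gluings (up to isomorphism). -/
inductive Synth3 : ∀ {V : Type}, Multigraph V → Prop
  | dumbbell : Synth3 dumbbell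
  | glue {V₁ V₂ : Type} {G₁ : Multigraph V₁} {G₂ : Multigraph V₂} (u₁ : V₁) (u₂ : V₂) :
      Synth3 G₁ → Synth3 G₂ → Synth3 (blockGlue G₁ G₂ u₁ u₂)
  | expand {V : Type} {G : Multigraph V} (u : V) {d d' : ℕ} (h2 : 2 ≤ d') (hdd : d' ≤ d)
      (ι : Fin d ≃ {e : G.Edge // u ∈ G.ends e}) :
      Synth3 G → Synth3 (G.cycleExpand u h2 hdd ι)
  | iso {V W : Type} {G : Multigraph V} {H : Multigraph W} :
      Synth3 G → Iso G H → Synth3 H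

/-- The graphs obtainable from 3-thick trees by block-respecting cycle
expansions (cycle expansions whose new cycle lies inside a single block of the
resulting graph), up to isomorphism. -/
inductive BRSynth : ∀ {V : Type}, Multigraph V → Prop
  | base {V : Type} {G : Multigraph V} : IsThreeThickTree G → BRSynth G
  | expand {V : Type} {G : Multigraph V} (u : V) {d d' : ℕ} (h2 : 2 ≤ d') (hdd : d' ≤ d)
      (ι : Fin d ≃ {e : G.Edge // u ∈ G.ends e})
      (hblock : ∃ B : Set ({x : V // x ≠ u} ⊕ Fin d'),
        (G.cycleExpand u h2 hdd ι).IsBlock B ∧ ∀ j : Fin d', Sum.inr j ∈ B) :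
      BRSynth G → BRSynth (G.cycleExpand u h2 hdd ι)
  | iso {V W : Type} {G : Multigraph V} {H : Multigraph W} :
      BRSynth G → Iso G H → BRSynth H

end Multigraph
namespace Multigraph

open scoped Classical

section Aux

variable {V W : Type}

namespace Walk

@[simp] lemma edges_nil {G : Multigraph V} (v : V) : (Walk.nil (G := G) v).edges = [] := rfl

@[simp] lemma edges_cons {G : Multigraph V} {u v w : V} (e : G.Edge)
    (he : G.ends e = s(u, v)) (p : G.Walk v w) :
    (Walk.cons e he p).edges = e :: p.edges := rfl

/-- Change the (propositionally equal) endpoints of a walk. -/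
def copy {G : Multigraph V} {u v u' v' : V} (p : G.Walk u v) (hu : u = u') (hv : v = v') :
    G.Walk u' v' := hu ▸ hv ▸ p

@[simp] lemma edges_copy {G : Multigraph V} {u v u' v' : V} (p : G.Walk u v)
    (hu : u = u') (hv : v = v') : (p.copy hu hv).edges = p.edges := by
  subst hu; subst hv; rfl

/-- Concatenation of walks. -/
def append {G : Multigraph V} : ∀ {u v w : V}, G.Walk u v → G.Walk v w → G.Walk u w
  | _, _, _, .nil _, q => q
  | _, _, _, .cons e he p, q => .cons e he (p.append q)

@[simp] lemma edges_append {G : Multigraph V} : ∀ {u v w : V} (p : G.Walk u v)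
    (q : G.Walk v w), (p.append q).edges = p.edges ++ q.edges
  | _, _, _, .nil _, q => rfl
  | _, _, _, .cons e he p, q => by
      simp [append, edges_append p q]

lemma exists_reverse {G : Multigraph V} : ∀ {u v : V} (p : G.Walk u v),
    ∃ q : G.Walk v u, q.edges = p.edges.reverse := by
  intro u v p
  induction p with
  | nil u => exact ⟨.nil u, rfl⟩
  | cons e he p ih =>
      obtain ⟨q, hq⟩ := ih
      refine ⟨q.append (.cons e (by rw [he, Sym2.eq_swap]) (.nil _)), ?_⟩
      simp [hq]

lemma exists_map {G : Multigraph V} {H : Multigraph W} (f : V → W) (g : G.Edge → H.Edge)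
    (hg : ∀ e, H.ends (g e) = (G.ends e).map f) :
    ∀ {u v : V} (p : G.Walk u v), ∃ q : H.Walk (f u) (f v), q.edges = p.edges.map g := by
  intro u v p
  induction p with
  | nil u => exact ⟨.nil _, rfl⟩
  | cons e he p ih =>
      obtain ⟨q, hq⟩ := ih
      exact ⟨.cons (g e) (by rw [hg, he, Sym2.map_pair_eq]) q, by simp [hq]⟩

lemma exists_proj {G : Multigraph V} {H : Multigraph W} (π : W → V)
    (g : H.Edge → Option G.Edge)
    (hsome : ∀ e e', g e = some e' → ∀ a b, H.ends e = s(a, b) → G.ends e' = s(π a, π b))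
    (hnone : ∀ e, g e = none → ∀ a b, H.ends e = s(a, b) → π a = π b) :
    ∀ {u v : W} (p : H.Walk u v), ∃ q : G.Walk (π u) (π v), q.edges = p.edges.filterMap g := by
  intro u v p
  induction p with
  | nil u => exact ⟨.nil _, rfl⟩
  | cons e he p ih =>
      obtain ⟨q, hq⟩ := ih
      cases hge : g e with
      | none =>
          refine ⟨q.copy (hnone e hge _ _ he).symm rfl, ?_⟩
          rw [edges_copy, hq, edges_cons, List.filterMap_cons, hge]
      | some e' =>
          refine ⟨.cons e' (hsome e e' hge _ _ he) q, ?_⟩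
          rw [edges_cons, edges_cons, List.filterMap_cons, hge, hq]

end Walk

lemma HasEDP.symm {G : Multigraph V} {u v : V} {k : ℕ} (h : G.HasEDP u v k) :
    G.HasEDP v u k := by
  obtain ⟨P, hnd, hdisj⟩ := h
  choose Q hQ using fun i => Walk.exists_reverse (P i)
  refine ⟨Q, fun i => ?_, fun i j hij e he1 he2 => ?_⟩
  · rw [hQ]; exact List.nodup_reverse.mpr (hnd i)
  · rw [hQ, List.mem_reverse] at he1 he2
    exact hdisj i j hij e he1 he2

lemma HasEDP.map_of {G : Multigraph V} {H : Multigraph W} {f : V → W}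
    {g : G.Edge → H.Edge} (hg : ∀ e, H.ends (g e) = (G.ends e).map f)
    (hginj : Function.Injective g) {u v : V} {k : ℕ} (h : G.HasEDP u v k) :
    H.HasEDP (f u) (f v) k := by
  obtain ⟨P, hnd, hdisj⟩ := h
  choose Q hQ using fun i => Walk.exists_map f g hg (P i)
  refine ⟨Q, fun i => ?_, fun i j hij e he1 he2 => ?_⟩
  · rw [hQ]; exact (hnd i).map hginj
  · rw [hQ, List.mem_map] at he1 he2
    obtain ⟨a, ha, rfl⟩ := he1
    obtain ⟨b, hb, hba⟩ := he2
    exact hdisj i j hij a ha (hginj hba ▸ hb)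

lemma HasEDP.proj_of {G : Multigraph V} {H : Multigraph W} {π : W → V}
    {g : H.Edge → Option G.Edge}
    (hsome : ∀ e e', g e = some e' → ∀ a b, H.ends e = s(a, b) → G.ends e' = s(π a, π b))
    (hnone : ∀ e, g e = none → ∀ a b, H.ends e = s(a, b) → π a = π b)
    (hginj : ∀ e₁ e₂ e', g e₁ = some e' → g e₂ = some e' → e₁ = e₂)
    {u v : W} {k : ℕ} (h : H.HasEDP u v k) : G.HasEDP (π u) (π v) k := by
  obtain ⟨P, hnd, hdisj⟩ := h
  choose Q hQ using fun i => Walk.exists_proj π g hsome hnone (P i)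
  refine ⟨Q, fun i => ?_, fun i j hij e he1 he2 => ?_⟩
  · rw [hQ]
    exact (hnd i).filterMap (fun a a' b hb hb' => hginj a a' b hb hb')
  · rw [hQ, List.mem_filterMap] at he1 he2
    obtain ⟨a, ha, hga⟩ := he1
    obtain ⟨b, hb, hgb⟩ := he2
    exact hdisj i j hij a ha (hginj b a e hgb hga ▸ hb)

end Aux

/-- **Block gluing preserves exact `k`-edge-connectivity.**  If `G₁` and `G₂`
are exactly `k`-edge-connected multigraphs (on disjoint vertex types) and `G`
is obtained by identifying the vertex `u₁` of `G₁` with the vertex `u₂` of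
`G₂`, then `G` is exactly `k`-edge-connected. -/
theorem blockGlue_exactlyEdgeConnected {V₁ V₂ : Type} (G₁ : Multigraph V₁)
    (G₂ : Multigraph V₂) (u₁ : V₁) (u₂ : V₂) (k : ℕ)
    (h₁ : G₁.ExactlyEdgeConnected k) (h₂ : G₂.ExactlyEdgeConnected k) :
    (blockGlue G₁ G₂ u₁ u₂).ExactlyEdgeConnected k := by
  classical
  obtain ⟨hnt₁, hG₁⟩ := h₁
  obtain ⟨hnt₂, hG₂⟩ := h₂
  set GG := blockGlue G₁ G₂ u₁ u₂ with hGG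
  set f₂ : V₂ → V₁ ⊕ {y : V₂ // y ≠ u₂} :=
    fun y => if h : y = u₂ then Sum.inl u₁ else Sum.inr ⟨y, h⟩ with hf₂
  have hg₁ : ∀ e : G₁.Edge, GG.ends (Sum.inl e) = (G₁.ends e).map Sum.inl := fun _ => rfl
  have hg₂ : ∀ e : G₂.Edge, GG.ends (Sum.inr e) = (G₂.ends e).map f₂ := fun _ => rfl
  set π₁ : V₁ ⊕ {y : V₂ // y ≠ u₂} → V₁ := Sum.elim id (fun _ => u₁) with hπ₁
  set π₂ : V₁ ⊕ {y : V₂ // y ≠ u₂} → V₂ := Sum.elim (fun _ => u₂) Subtype.val with hπ₂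
  set gp₁ : GG.Edge → Option G₁.Edge := Sum.elim some (fun _ => none) with hgp₁
  set gp₂ : GG.Edge → Option G₂.Edge := Sum.elim (fun _ => none) some with hgp₂
  have hπ₁f₂ : ∀ z, π₁ (f₂ z) = u₁ := by
    intro z
    by_cases h : z = u₂ <;> simp [hf₂, h, hπ₁]
  have hπ₂f₂ : ∀ z, π₂ (f₂ z) = z := by
    intro z
    by_cases h : z = u₂ <;> simp [hf₂, h, hπ₂]
  have hf₂u₂ : f₂ u₂ = Sum.inl u₁ := by simp [hf₂]
  have hf₂y : ∀ y : {y : V₂ // y ≠ u₂}, f₂ y.1 = Sum.inr y := by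
    intro y; simp [hf₂, y.2]
  -- projection data for `π₁`
  have hsome₁ : ∀ e e', gp₁ e = some e' → ∀ a b, GG.ends e = s(a, b) →
      G₁.ends e' = s(π₁ a, π₁ b) := by
    rintro (e | e) e' hge a b hab
    · obtain rfl : e = e' := Option.some_injective _ hge
      obtain ⟨x, y, hxy⟩ := exists_pair_eq (G₁.ends e)
      rw [hg₁, hxy, Sym2.map_pair_eq] at hab
      rcases Sym2.eq_iff.mp hab with ⟨rfl, rfl⟩ | ⟨rfl, rfl⟩
      · simpa [hπ₁] using hxy
      · rw [hxy, Sym2.eq_swap]; simp [hπ₁]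
    · exact absurd hge (by simp [hgp₁])
  have hnone₁ : ∀ e, gp₁ e = none → ∀ a b, GG.ends e = s(a, b) → π₁ a = π₁ b := by
    rintro (e | e) hge a b hab
    · exact absurd hge (by simp [hgp₁])
    · obtain ⟨x, y, hxy⟩ := exists_pair_eq (G₂.ends e)
      rw [hg₂, hxy, Sym2.map_pair_eq] at hab
      rcases Sym2.eq_iff.mp hab with ⟨rfl, rfl⟩ | ⟨rfl, rfl⟩ <;>
        rw [hπ₁f₂, hπ₁f₂]
  have hinj₁ : ∀ e₁ e₂ e', gp₁ e₁ = some e' → gp₁ e₂ = some e' → e₁ = e₂ := by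
    rintro (e | e) (f | f) e' h1 h2 <;>
      rw [hgp₁] at h1 h2 <;>
      simp only [Sum.elim_inl, Sum.elim_inr] at h1 h2
    · injection h1 with h1; injection h2 with h2; rw [h1, h2]
    · exact absurd h2 (by simp)
    · exact absurd h1 (by simp)
    · exact absurd h1 (by simp)
  -- projection data for `π₂`
  have hsome₂ : ∀ e e', gp₂ e = some e' → ∀ a b, GG.ends e = s(a, b) →
      G₂.ends e' = s(π₂ a, π₂ b) := by
    rintro (e | e) e' hge a b hab
    · exact absurd hge (by simp [hgp₂])
    · obtain rfl : e = e' := Option.some_injective _ hge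
      obtain ⟨x, y, hxy⟩ := exists_pair_eq (G₂.ends e)
      rw [hg₂, hxy, Sym2.map_pair_eq] at hab
      rcases Sym2.eq_iff.mp hab with ⟨rfl, rfl⟩ | ⟨rfl, rfl⟩
      · rw [hπ₂f₂, hπ₂f₂]; exact hxy
      · rw [hπ₂f₂, hπ₂f₂, hxy, Sym2.eq_swap]
  have hnone₂ : ∀ e, gp₂ e = none → ∀ a b, GG.ends e = s(a, b) → π₂ a = π₂ b := by
    rintro (e | e) hge a b hab
    · obtain ⟨x, y, hxy⟩ := exists_pair_eq (G₁.ends e)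
      rw [hg₁, hxy, Sym2.map_pair_eq] at hab
      rcases Sym2.eq_iff.mp hab with ⟨rfl, rfl⟩ | ⟨rfl, rfl⟩ <;> simp [hπ₂]
    · exact absurd hge (by simp [hgp₂])
  have hinj₂ : ∀ e₁ e₂ e', gp₂ e₁ = some e' → gp₂ e₂ = some e' → e₁ = e₂ := by
    rintro (e | e) (f | f) e' h1 h2 <;>
      rw [hgp₂] at h1 h2 <;>
      simp only [Sum.elim_inl, Sum.elim_inr] at h1 h2
    · exact absurd h1 (by simp)
    · exact absurd h1 (by simp)
    · exact absurd h2 (by simp)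
    · injection h1 with h1; injection h2 with h2; rw [h1, h2]
  -- the mixed case
  have hLR : ∀ (x : V₁) (y : {y : V₂ // y ≠ u₂}),
      GG.HasEDP (Sum.inl x) (Sum.inr y) k ∧ ¬ GG.HasEDP (Sum.inl x) (Sum.inr y) (k + 1) := by
    intro x y
    by_cases hx : x = u₁
    · subst hx
      constructor
      · have := ((hG₂ u₂ y.1 (Ne.symm y.2)).1).map_of hg₂ Sum.inr_injective
        rwa [hf₂u₂, hf₂y] at this
      · intro h
        have := h.proj_of hsome₂ hnone₂ hinj₂
        simp only [hπ₂, Sum.elim_inl, Sum.elim_inr] at this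
        exact (hG₂ u₂ y.1 (Ne.symm y.2)).2 this
    · constructor
      · obtain ⟨P, hPnd, hPdis⟩ := (hG₁ x u₁ hx).1
        obtain ⟨Q, hQnd, hQdis⟩ := (hG₂ u₂ y.1 (Ne.symm y.2)).1
        choose P' hP' using fun i => Walk.exists_map (H := GG) Sum.inl Sum.inl hg₁ (P i)
        choose Q' hQ' using fun i => Walk.exists_map (H := GG) f₂ Sum.inr hg₂ (Q i)
        refine ⟨fun i => (P' i).append ((Q' i).copy hf₂u₂ (hf₂y y)), fun i => ?_,
          fun i j hij e he1 he2 => ?_⟩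
        · rw [Walk.edges_append, Walk.edges_copy, hP', hQ']
          refine List.Nodup.append ((hPnd i).map Sum.inl_injective)
            ((hQnd i).map Sum.inr_injective) ?_
          rintro e he1 he2
          replace he1 := List.mem_map.mp he1; replace he2 := List.mem_map.mp he2
          obtain ⟨a, -, rfl⟩ := he1
          obtain ⟨b, -, hb⟩ := he2
          cases hb
        · rw [Walk.edges_append, Walk.edges_copy, hP', hQ', List.mem_append] at he1 he2
          rcases he1 with he1 | he1 <;> rcases he2 with he2 | he2 <;>
            (replace he1 := List.mem_map.mp he1; replace he2 := List.mem_map.mp he2)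
          · obtain ⟨a, ha, rfl⟩ := he1
            obtain ⟨b, hb, hba⟩ := he2
            exact hPdis i j hij a ha (Sum.inl_injective hba ▸ hb)
          · obtain ⟨a, ha, rfl⟩ := he1
            obtain ⟨b, hb, hba⟩ := he2
            cases hba
          · obtain ⟨a, ha, rfl⟩ := he1
            obtain ⟨b, hb, hba⟩ := he2
            cases hba
          · obtain ⟨a, ha, rfl⟩ := he1
            obtain ⟨b, hb, hba⟩ := he2
            exact hQdis i j hij a ha (Sum.inr_injective hba ▸ hb)
      · intro h
        have := h.proj_of hsome₁ hnone₁ hinj₁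
        simp only [hπ₁, Sum.elim_inl, Sum.elim_inr, id] at this
        exact (hG₁ x u₁ hx).2 this
  refine ⟨?_, ?_⟩
  · obtain ⟨x, y, hxy⟩ := hnt₁
    exact ⟨Sum.inl x, Sum.inl y, fun h => hxy (Sum.inl_injective h)⟩
  · rintro (x | y) (x' | y') hne
    · have hxx : x ≠ x' := fun h => hne (congrArg Sum.inl h)
      constructor
      · exact ((hG₁ x x' hxx).1).map_of hg₁ Sum.inl_injective
      · intro h
        have := h.proj_of hsome₁ hnone₁ hinj₁
        simp only [hπ₁, Sum.elim_inl, id] at this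
        exact (hG₁ x x' hxx).2 this
    · exact hLR x y'
    · exact ⟨(hLR x' y).1.symm, fun h => (hLR x' y).2 h.symm⟩
    · have hyy : y.1 ≠ y'.1 := fun h => hne (congrArg Sum.inr (Subtype.ext h))
      constructor
      · have := ((hG₂ y.1 y'.1 hyy).1).map_of hg₂ Sum.inr_injective
        rwa [hf₂y, hf₂y] at this
      · intro h
        have := h.proj_of hsome₂ hnone₂ hinj₂
        simp only [hπ₂, Sum.elim_inr] at this
        exact (hG₂ y.1 y'.1 hyy).2 this

end Multigraph
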